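/- Tensor product property of the relative γ₂-norm: let D₁, D₂ be finite sets and A = (A_{xy} : Z₂ → Z₁), B = (B_{xy} : Z₂′ → Z₁′), Δ = (Δ_{xy} : X₂ → X₁), E = (E_{xy} : X₂′ → X₁′) families of linear maps between finite-dimensional complex inner product spaces, indexed by x ∈ D₁, y ∈ D₂, with γ₂(A|Δ) < +∞ and γ₂(B|E) < +∞. Then γ₂((A_{xy} ⊗ B_{xy})_{x,y} | (Δ_{xy} ⊗ E_{xy})_{x,y}) ≤ γ₂(A|Δ) · γ₂(B|E), where A_{xy} ⊗ B_{xy} : Z₂ ⊗ Z₂′ → Z₁ ⊗ Z₁′ and Δ_{xy} ⊗ E_{xy} : X₂ ⊗ X₂′ → X₁ ⊗ X₁′ are the tensor products of linear maps. -/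

import Mathlib

noncomputable section

open scoped ENNReal ComplexOrder

/-- A linear endomorphism of a finite-dimensional complex inner ℂ product space is unitary. -/
def IsUnitaryMap {E : Type*} [NormedAddCommGroup E] [InnerProductSpace ℂ E]
    [FiniteDimensional ℂ E] (f : E →ₗ[ℂ] E) : Prop :=
  LinearMap.adjoint f ∘ₗ f = LinearMap.id ∧ f ∘ₗ LinearMap.adjoint f = LinearMap.id

/-- Operator norm of a linear map between finite-dimensional inner ℂ product spaces. -/
noncomputable def opNorm {E F : Type*} [NormedAddCommGroup E] [InnerProductSpace ℂ E]
    [NormedAddCommGroup F] [InnerProductSpace ℂ F] [FiniteDimensional ℂ E]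
    (f : E →ₗ[ℂ] F) : ℝ :=
  ‖LinearMap.toContinuousLinearMap f‖

/-- A complex scalar viewed as a linear map `ℂ → ℂ`. -/
noncomputable def scalarMap (c : ℂ) : ℂ →ₗ[ℂ] ℂ := c • LinearMap.id

/-- The block-diagonal map `⊕ᵢ Δᵢ` on an `ℓ²`-direct sum of copies of a space. -/
noncomputable def piBlock {ι : Type*} [Fintype ι] {X₁ X₂ : Type*}
    [NormedAddCommGroup X₁] [InnerProductSpace ℂ X₁]
    [NormedAddCommGroup X₂] [InnerProductSpace ℂ X₂]
    (Δ : ι → (X₂ →ₗ[ℂ] X₁)) :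
    PiLp 2 (fun _ : ι => X₂) →ₗ[ℂ] PiLp 2 (fun _ : ι => X₁) :=
  (WithLp.linearEquiv 2 ℂ (∀ _ : ι, X₁)).symm.toLinearMap ∘ₗ
    (LinearMap.pi fun i => Δ i ∘ₗ LinearMap.proj i) ∘ₗ
      (WithLp.linearEquiv 2 ℂ (∀ _ : ι, X₂)).toLinearMap

/-- The relative `γ₂`-norm `γ₂(A | Δ)` of a family `A = (A_{xy} : Z₂ → Z₁)` relative to a
family `Δ = (Δ_{xy} : X₂ → X₁)`: the infimum over `k ∈ ℕ` and factorizations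
`A_{xy} = Υ_x* ∘ (Δ_{xy} ⊗ id_{ℂᵏ}) ∘ Φ_y` of `max (max_x ‖Υ_x‖²) (max_y ‖Φ_y‖²)`,
where `X ⊗ ℂᵏ` is realized as the `ℓ²`-direct sum of `k` copies of `X`.
The infimum of the empty set is `+∞`. -/
noncomputable def relGamma2 {D₁ D₂ : Type*} [Fintype D₁] [Fintype D₂]
    {X₁ X₂ Z₁ Z₂ : Type*}
    [NormedAddCommGroup X₁] [InnerProductSpace ℂ X₁] [FiniteDimensional ℂ X₁]
    [NormedAddCommGroup X₂] [InnerProductSpace ℂ X₂] [FiniteDimensional ℂ X₂]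
    [NormedAddCommGroup Z₁] [InnerProductSpace ℂ Z₁] [FiniteDimensional ℂ Z₁]
    [NormedAddCommGroup Z₂] [InnerProductSpace ℂ Z₂] [FiniteDimensional ℂ Z₂]
    (A : D₁ → D₂ → (Z₂ →ₗ[ℂ] Z₁)) (Δ : D₁ → D₂ → (X₂ →ₗ[ℂ] X₁)) : ℝ≥0∞ :=
  ⨅ (k : ℕ) (Υ : D₁ → (Z₁ →ₗ[ℂ] PiLp 2 (fun _ : Fin k => X₁)))
    (Φ : D₂ → (Z₂ →ₗ[ℂ] PiLp 2 (fun _ : Fin k => X₂)))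
    (_ : ∀ x y, A x y =
      LinearMap.adjoint (Υ x) ∘ₗ piBlock (fun _ : Fin k => Δ x y) ∘ₗ Φ y),
    (⨆ x, ENNReal.ofReal (opNorm (Υ x) ^ 2)) ⊔ (⨆ y, ENNReal.ofReal (opNorm (Φ y) ^ 2))

section OpNorm
variable {E F G : Type*} [NormedAddCommGroup E] [InnerProductSpace ℂ E]
  [NormedAddCommGroup F] [InnerProductSpace ℂ F]
  [NormedAddCommGroup G] [InnerProductSpace ℂ G]
  [FiniteDimensional ℂ E]

theorem opNorm_nonneg (f : E →ₗ[ℂ] F) : 0 ≤ opNorm f := norm_nonneg _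

theorem le_opNorm (f : E →ₗ[ℂ] F) (v : E) : ‖f v‖ ≤ opNorm f * ‖v‖ := by
  simpa [opNorm] using (LinearMap.toContinuousLinearMap f).le_opNorm v

theorem opNorm_le_bound (f : E →ₗ[ℂ] F) {c : ℝ} (hc : 0 ≤ c)
    (h : ∀ v, ‖f v‖ ≤ c * ‖v‖) : opNorm f ≤ c :=
  ContinuousLinearMap.opNorm_le_bound _ hc (by simpa using h)

end OpNorm

section PiBlockLemmas
variable {ι : Type*} [Fintype ι] {X₁ X₂ : Type*}
  [NormedAddCommGroup X₁] [InnerProductSpace ℂ X₁]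
  [NormedAddCommGroup X₂] [InnerProductSpace ℂ X₂]

theorem piBlock_apply (Δ : ι → (X₂ →ₗ[ℂ] X₁)) (v : PiLp 2 fun _ : ι => X₂) (i : ι) :
    piBlock Δ v i = Δ i (v i) := rfl

theorem norm_piBlock_const_le [FiniteDimensional ℂ X₂] (f : X₂ →ₗ[ℂ] X₁)
    (v : PiLp 2 fun _ : ι => X₂) :
    ‖piBlock (fun _ : ι => f) v‖ ≤ opNorm f * ‖v‖ := by
  rw [PiLp.norm_eq_of_L2, PiLp.norm_eq_of_L2]
  rw [← Real.sqrt_sq (opNorm_nonneg f), ← Real.sqrt_mul (sq_nonneg _)]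
  apply Real.sqrt_le_sqrt
  rw [Finset.mul_sum]
  apply Finset.sum_le_sum
  intro i _
  rw [piBlock_apply, ← mul_pow]
  exact pow_le_pow_left₀ (norm_nonneg _) (le_opNorm f (v i)) 2

end PiBlockLemmas

/-- A realization of the tensor product of two finite-dimensional complex inner ℂ product
spaces `Z, Z'` inside a space `ZW`: a bilinear map `t` whose image spans `ZW` and which
multiplies inner ℂ products of pure tensors (`⟨a ⊗ b, c ⊗ d⟩ = ⟨a,c⟩⟨b,d⟩`). -/
structure TensorStructure (Z Z' ZW : Type*)
    [NormedAddCommGroup Z] [InnerProductSpace ℂ Z]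
    [NormedAddCommGroup Z'] [InnerProductSpace ℂ Z']
    [NormedAddCommGroup ZW] [InnerProductSpace ℂ ZW] where
  t : Z →ₗ[ℂ] Z' →ₗ[ℂ] ZW
  inner_t : ∀ (a c : Z) (b d : Z'),
    (inner ℂ (t a b) (t c d) : ℂ) = (inner ℂ a c : ℂ) * (inner ℂ b d : ℂ)
  span_t : Submodule.span ℂ (Set.range fun p : Z × Z' => t p.1 p.2) = ⊤

namespace TensorStructure

variable {Z Z' ZZ W : Type*}
  [NormedAddCommGroup Z] [InnerProductSpace ℂ Z]
  [NormedAddCommGroup Z'] [InnerProductSpace ℂ Z']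
  [NormedAddCommGroup ZZ] [InnerProductSpace ℂ ZZ]
  [NormedAddCommGroup W] [InnerProductSpace ℂ W]

def flip (T : TensorStructure Z Z' ZZ) : TensorStructure Z' Z ZZ where
  t := T.t.flip
  inner_t a c b d := by
    simp only [LinearMap.flip_apply, T.inner_t]; ring
  span_t := by
    rw [← T.span_t]
    congr 1
    ext u
    constructor <;> rintro ⟨p, rfl⟩
    · exact ⟨(p.2, p.1), rfl⟩
    · exact ⟨(p.2, p.1), rfl⟩

theorem ext_map (T : TensorStructure Z Z' ZZ) {h₁ h₂ : ZZ →ₗ[ℂ] W}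
    (H : ∀ a b, h₁ (T.t a b) = h₂ (T.t a b)) : h₁ = h₂ :=
  LinearMap.ext_on T.span_t (by rintro u ⟨p, rfl⟩; exact H p.1 p.2)

theorem eq_of_inner_t (T : TensorStructure Z Z' ZZ) {u v : ZZ}
    (H : ∀ a b, (inner ℂ u (T.t a b) : ℂ) = inner ℂ v (T.t a b)) : u = v := by
  refine ext_inner_right ℂ fun w => ?_
  have h : (innerSL ℂ u : ZZ →L[ℂ] ℂ) = innerSL ℂ v :=
    ContinuousLinearMap.coe_injective (LinearMap.ext_on (f := ((innerSL ℂ u : ZZ →L[ℂ] ℂ) : ZZ →ₗ[ℂ] ℂ))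
      (g := ((innerSL ℂ v : ZZ →L[ℂ] ℂ) : ZZ →ₗ[ℂ] ℂ)) T.span_t
      (by rintro w ⟨p, rfl⟩; simpa using H p.1 p.2))
  exact congrFun (congrArg (fun (f : ZZ →L[ℂ] ℂ) => (f : ZZ → ℂ)) h) w

section Lift
variable {ι : Type*} [Fintype ι]

/-- `v ↦ ∑ j, t (v j) (e' j)`, as a linear map. -/
def lift1 (T : TensorStructure Z Z' ZZ) (e' : ι → Z') :
    PiLp 2 (fun _ : ι => Z) →ₗ[ℂ] ZZ :=
  ∑ j, T.t.flip (e' j) ∘ₗ LinearMap.proj j ∘ₗ (WithLp.linearEquiv 2 ℂ (∀ _ : ι, Z)).toLinearMap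

theorem lift1_apply (T : TensorStructure Z Z' ZZ) (e' : ι → Z')
    (v : PiLp 2 fun _ : ι => Z) : T.lift1 e' v = ∑ j, T.t (v j) (e' j) := by
  simp [lift1, LinearMap.sum_apply]

theorem inner_lift1 (T : TensorStructure Z Z' ZZ) (e' : OrthonormalBasis ι ℂ Z')
    (v w : PiLp 2 fun _ : ι => Z) :
    (inner ℂ (T.lift1 e' v) (T.lift1 e' w) : ℂ) = inner ℂ v w := by
  classical
  have he' := orthonormal_iff_ite.mp e'.orthonormal
  rw [lift1_apply, lift1_apply, sum_inner, PiLp.inner_apply]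
  refine Finset.sum_congr rfl fun j _ => ?_
  rw [inner_sum]
  rw [Finset.sum_eq_single j]
  · rw [T.inner_t, he', if_pos rfl, mul_one]
  · intro j' _ hj'
    rw [T.inner_t, he', if_neg (Ne.symm hj'), mul_zero]
  · simp

theorem norm_lift1 (T : TensorStructure Z Z' ZZ) (e' : OrthonormalBasis ι ℂ Z')
    (v : PiLp 2 fun _ : ι => Z) : ‖T.lift1 e' v‖ = ‖v‖ := by
  rw [@norm_eq_sqrt_re_inner ℂ, @norm_eq_sqrt_re_inner ℂ, inner_lift1]

theorem lift1_surjective (T : TensorStructure Z Z' ZZ) (e' : OrthonormalBasis ι ℂ Z') :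
    Function.Surjective (T.lift1 e') := by
  rw [← LinearMap.range_eq_top, eq_top_iff, ← T.span_t, Submodule.span_le]
  rintro u ⟨⟨a, b⟩, rfl⟩
  refine ⟨(WithLp.equiv 2 _).symm fun j => (inner ℂ (e' j) b : ℂ) • a, ?_⟩
  rw [lift1_apply]
  have : ∀ j, T.t ((inner ℂ (e' j) b : ℂ) • a) (e' j)
      = T.t a ((inner ℂ (e' j) b : ℂ) • e' j) := by
    intro j; simp [map_smul]
  simp only [WithLp.equiv_symm_apply, PiLp.toLp_apply] at this ⊢
  calc ∑ j, T.t ((inner ℂ (e' j) b : ℂ) • a) (e' j)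
      = ∑ j, T.t a ((inner ℂ (e' j) b : ℂ) • e' j) := Finset.sum_congr rfl fun j _ => this j
    _ = T.t a (∑ j, (inner ℂ (e' j) b : ℂ) • e' j) := by rw [map_sum]
    _ = T.t a b := by rw [e'.sum_repr']

end Lift

section Tmap
variable {X X' XX : Type*}
  [NormedAddCommGroup X] [InnerProductSpace ℂ X]
  [NormedAddCommGroup X'] [InnerProductSpace ℂ X']
  [NormedAddCommGroup XX] [InnerProductSpace ℂ XX]
  [FiniteDimensional ℂ Z] [FiniteDimensional ℂ Z']

theorem t_expand (T : TensorStructure Z Z' ZZ) {ι ι' : Type*} [Fintype ι] [Fintype ι']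
    (e : OrthonormalBasis ι ℂ Z) (e' : OrthonormalBasis ι' ℂ Z') (a : Z) (b : Z') :
    T.t a b = ∑ s, ∑ j, ((inner ℂ (e s) a : ℂ) * (inner ℂ (e' j) b : ℂ)) • T.t (e s) (e' j) := by
  conv_lhs => rw [← e.sum_repr' a, ← e'.sum_repr' b]
  simp only [map_sum, LinearMap.sum_apply, map_smul, LinearMap.smul_apply, Finset.smul_sum,
    smul_smul]
  rw [Finset.sum_comm]
  exact Finset.sum_congr rfl fun s _ => Finset.sum_congr rfl fun j _ => by rw [mul_comm]

set_option maxHeartbeats 1000000 in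
theorem exists_tmap (T : TensorStructure Z Z' ZZ) (S : TensorStructure X X' XX)
    (f : Z →ₗ[ℂ] X) (g : Z' →ₗ[ℂ] X') :
    ∃ h : ZZ →ₗ[ℂ] XX, ∀ a b, h (T.t a b) = S.t (f a) (g b) := by
  classical
  set e := stdOrthonormalBasis ℂ Z
  set e' := stdOrthonormalBasis ℂ Z'
  have horth : Orthonormal ℂ (fun p : Fin (Module.finrank ℂ Z) × Fin (Module.finrank ℂ Z') =>
      T.t (e p.1) (e' p.2)) := by
    rw [orthonormal_iff_ite]
    intro p q
    rw [T.inner_t, orthonormal_iff_ite.mp e.orthonormal, orthonormal_iff_ite.mp e'.orthonormal]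
    by_cases h1 : p.1 = q.1 <;> by_cases h2 : p.2 = q.2 <;>
      simp [h1, h2, Prod.ext_iff]
  have hspan : ⊤ ≤ Submodule.span ℂ (Set.range fun p :
      Fin (Module.finrank ℂ Z) × Fin (Module.finrank ℂ Z') => T.t (e p.1) (e' p.2)) := by
    rw [← T.span_t, Submodule.span_le]
    rintro u ⟨⟨a, b⟩, rfl⟩
    show T.t a b ∈ _
    rw [T.t_expand e e' a b]
    exact Submodule.sum_mem _ fun s _ => Submodule.sum_mem _ fun j _ =>
      Submodule.smul_mem _ _ (Submodule.subset_span ⟨(s, j), rfl⟩)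
  set B : Module.Basis _ ℂ ZZ := Module.Basis.mk horth.linearIndependent hspan
  refine ⟨B.constr ℂ (fun p => S.t (f (e p.1)) (g (e' p.2))), ?_⟩
  set h := B.constr ℂ (fun p => S.t (f (e p.1)) (g (e' p.2))) with hh
  intro a b
  have step1 : ∀ (s) (j), h (T.t (e s) (e' j)) = S.t (f (e s)) (g (e' j)) := by
    intro s j
    have : T.t (e s) (e' j) = B (s, j) := (Module.Basis.mk_apply horth.linearIndependent hspan (s, j)).symm
    rw [this, hh, Module.Basis.constr_basis]
  have step2 : ∀ s, (h ∘ₗ T.t (e s) : Z' →ₗ[ℂ] XX) = (S.t (f (e s))) ∘ₗ g :=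
    fun s => Module.Basis.ext e'.toBasis fun j => by
      simpa [OrthonormalBasis.coe_toBasis] using step1 s j
  have step3 : (h ∘ₗ T.t.flip b : Z →ₗ[ℂ] XX) = (S.t.flip (g b)) ∘ₗ f :=
    Module.Basis.ext e.toBasis fun s => by
      simpa [OrthonormalBasis.coe_toBasis, LinearMap.flip_apply] using
        LinearMap.congr_fun (step2 s) b
  simpa [LinearMap.flip_apply] using LinearMap.congr_fun step3 a

end Tmap

section OfBasis
variable {ι : Type*} [Fintype ι]
variable {X X' XX : Type*}
  [NormedAddCommGroup X] [InnerProductSpace ℂ X]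
  [NormedAddCommGroup X'] [InnerProductSpace ℂ X']
  [NormedAddCommGroup XX] [InnerProductSpace ℂ XX]

/-- The bilinear map underlying `ofBasis`. -/
def ofBasisT (e' : OrthonormalBasis ι ℂ Z') (X : Type*) [NormedAddCommGroup X]
    [InnerProductSpace ℂ X] : X →ₗ[ℂ] Z' →ₗ[ℂ] PiLp 2 (fun _ : ι => X) :=
  LinearMap.mk₂ ℂ
    (fun a b => (WithLp.equiv 2 (∀ _ : ι, X)).symm fun j => (inner ℂ (e' j) b : ℂ) • a)
    (fun a₁ a₂ b => by
      ext j
      show (inner ℂ (e' j) b : ℂ) • (a₁ + a₂)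
          = (inner ℂ (e' j) b : ℂ) • a₁ + (inner ℂ (e' j) b : ℂ) • a₂
      rw [smul_add])
    (fun c a b => by
      ext j
      show (inner ℂ (e' j) b : ℂ) • (c • a) = c • ((inner ℂ (e' j) b : ℂ) • a)
      rw [smul_comm])
    (fun a b₁ b₂ => by
      ext j
      show (inner ℂ (e' j) (b₁ + b₂) : ℂ) • a
          = (inner ℂ (e' j) b₁ : ℂ) • a + (inner ℂ (e' j) b₂ : ℂ) • a
      rw [inner_add_right, add_smul])
    (fun c a b => by
      ext j
      show (inner ℂ (e' j) (c • b) : ℂ) • a = c • ((inner ℂ (e' j) b : ℂ) • a)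
      rw [inner_smul_right, mul_smul])

theorem ofBasisT_apply (e' : OrthonormalBasis ι ℂ Z') (a : X) (b : Z') (j : ι) :
    ofBasisT e' X a b j = (inner ℂ (e' j) b : ℂ) • a := rfl

theorem ofBasisT_sum (e' : OrthonormalBasis ι ℂ Z') (v : PiLp 2 fun _ : ι => X) :
    ∑ j, ofBasisT e' X (v j) (e' j) = v := by
  classical
  ext j'
  show (∑ j, ofBasisT e' X (v j) (e' j)) j' = v j'
  rw [WithLp.ofLp_sum, Finset.sum_apply]
  have h1 : ∀ j : ι, (ofBasisT e' X (v j) (e' j)) j' = if j = j' then v j' else 0 := by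
    intro j
    rw [ofBasisT_apply, orthonormal_iff_ite.mp e'.orthonormal]
    by_cases h : j' = j
    · subst h; simp
    · rw [if_neg h, if_neg (Ne.symm h), zero_smul]
  rw [Finset.sum_congr rfl fun j _ => h1 j, Finset.sum_ite_eq']
  simp

/-- The canonical realization of `X ⊗ Z'` on `⊕_{j} X` given an orthonormal basis of `Z'`. -/
def ofBasis (e' : OrthonormalBasis ι ℂ Z') (X : Type*) [NormedAddCommGroup X]
    [InnerProductSpace ℂ X] : TensorStructure X Z' (PiLp 2 fun _ : ι => X) where
  t := ofBasisT e' X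
  inner_t a c b d := by
    rw [PiLp.inner_apply]
    have h1 : ∀ j : ι, (inner ℂ (ofBasisT e' X a b j) (ofBasisT e' X c d j) : ℂ)
        = ((inner ℂ b (e' j) : ℂ) * (inner ℂ (e' j) d : ℂ)) * (inner ℂ a c : ℂ) := by
      intro j
      rw [ofBasisT_apply, ofBasisT_apply, inner_smul_left, inner_smul_right, inner_conj_symm]
      ring
    calc (∑ j, (inner ℂ (ofBasisT e' X a b j) (ofBasisT e' X c d j) : ℂ))
        = ∑ j, ((inner ℂ b (e' j) : ℂ) * (inner ℂ (e' j) d : ℂ)) * (inner ℂ a c : ℂ) :=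
          Finset.sum_congr rfl fun j _ => h1 j
      _ = (∑ j, (inner ℂ b (e' j) : ℂ) * (inner ℂ (e' j) d : ℂ)) * (inner ℂ a c : ℂ) := by
          rw [← Finset.sum_mul]
      _ = (inner ℂ a c : ℂ) * (inner ℂ b d : ℂ) := by rw [e'.sum_inner_mul_inner]; ring
  span_t := by
    rw [eq_top_iff]
    intro v _
    rw [← ofBasisT_sum e' v]
    exact Submodule.sum_mem _ fun j _ => Submodule.subset_span ⟨(v j, e' j), rfl⟩

theorem ofBasis_sum (e' : OrthonormalBasis ι ℂ Z') (v : PiLp 2 fun _ : ι => X) :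
    ∑ j, (ofBasis e' X).t (v j) (e' j) = v := ofBasisT_sum e' v

end OfBasis

section NormBound
variable {X X' XX : Type*}
  [NormedAddCommGroup X] [InnerProductSpace ℂ X]
  [NormedAddCommGroup X'] [InnerProductSpace ℂ X']
  [NormedAddCommGroup XX] [InnerProductSpace ℂ XX]
  [FiniteDimensional ℂ Z] [FiniteDimensional ℂ Z'] [FiniteDimensional ℂ ZZ]
  [FiniteDimensional ℂ X]

theorem opNorm_tmap_le (T : TensorStructure Z Z' ZZ) (S : TensorStructure X X' XX)
    (f : Z →ₗ[ℂ] X) (g : Z' →ₗ[ℂ] X') (h : ZZ →ₗ[ℂ] XX)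
    (H : ∀ a b, h (T.t a b) = S.t (f a) (g b)) :
    opNorm h ≤ opNorm f * opNorm g := by
  set e' := stdOrthonormalBasis ℂ Z' with he'
  set e := stdOrthonormalBasis ℂ X with he
  set Mid := ofBasis e' X with hMid
  obtain ⟨h₁, H₁⟩ := exists_tmap T Mid f (LinearMap.id (R := ℂ) (M := Z'))
  obtain ⟨h₂, H₂⟩ := exists_tmap Mid S (LinearMap.id (R := ℂ) (M := X)) g
  have hcomp : h = h₂ ∘ₗ h₁ := T.ext_map fun a b => by
    rw [H, LinearMap.comp_apply, H₁, H₂]; rfl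
  have hb₁ : ∀ u, ‖h₁ u‖ ≤ opNorm f * ‖u‖ := by
    intro u
    obtain ⟨v, rfl⟩ := T.lift1_surjective e' u
    have e1 : h₁ (T.lift1 e' v) = piBlock (fun _ : Fin (Module.finrank ℂ Z') => f) v := by
      rw [lift1_apply, map_sum]
      have h1 : ∀ j, h₁ (T.t (v j) (e' j)) = Mid.t (f (v j)) (e' j) := fun j => by
        rw [H₁]; rfl
      rw [Finset.sum_congr rfl fun j _ => h1 j]
      exact ofBasis_sum e' (X := X) ((WithLp.equiv 2 (∀ _, X)).symm fun j => f (v j))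
    rw [e1, T.norm_lift1 e' v]
    exact norm_piBlock_const_le f v
  have hb₂ : ∀ u, ‖h₂ u‖ ≤ opNorm g * ‖u‖ := by
    intro u
    obtain ⟨v, rfl⟩ := Mid.flip.lift1_surjective e u
    have e2 : h₂ (Mid.flip.lift1 e v)
        = S.flip.lift1 e (piBlock (fun _ : Fin (Module.finrank ℂ X) => g) v) := by
      rw [lift1_apply, lift1_apply, map_sum]
      refine Finset.sum_congr rfl fun s _ => ?_
      show h₂ (Mid.t (e s) (v s)) = S.t (e s) (g (v s))
      rw [H₂]; rfl
    rw [e2, Mid.flip.norm_lift1 e v, S.flip.norm_lift1 e]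
    exact norm_piBlock_const_le g v
  rw [hcomp]
  refine opNorm_le_bound _ (mul_nonneg (opNorm_nonneg f) (opNorm_nonneg g)) fun v => ?_
  calc ‖h₂ (h₁ v)‖ ≤ opNorm g * ‖h₁ v‖ := hb₂ _
    _ ≤ opNorm g * (opNorm f * ‖v‖) :=
        mul_le_mul_of_nonneg_left (hb₁ v) (opNorm_nonneg g)
    _ = opNorm f * opNorm g * ‖v‖ := by ring

end NormBound

section PiTS
variable {X X' XX : Type*}
  [NormedAddCommGroup X] [InnerProductSpace ℂ X]
  [NormedAddCommGroup X'] [InnerProductSpace ℂ X']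
  [NormedAddCommGroup XX] [InnerProductSpace ℂ XX]
variable (ι ι' : Type*) [Fintype ι] [Fintype ι']

/-- The bilinear map underlying `piTS`. -/
def piT (S : TensorStructure X X' XX) :
    PiLp 2 (fun _ : ι => X) →ₗ[ℂ] PiLp 2 (fun _ : ι' => X') →ₗ[ℂ]
      PiLp 2 (fun _ : ι × ι' => XX) :=
  LinearMap.mk₂ ℂ
    (fun v w => (WithLp.equiv 2 (∀ _ : ι × ι', XX)).symm fun p => S.t (v p.1) (w p.2))
    (fun v₁ v₂ w => by
      ext p
      show S.t (v₁ p.1 + v₂ p.1) (w p.2) = S.t (v₁ p.1) (w p.2) + S.t (v₂ p.1) (w p.2)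
      rw [map_add, LinearMap.add_apply])
    (fun c v w => by
      ext p
      show S.t (c • v p.1) (w p.2) = c • S.t (v p.1) (w p.2)
      rw [map_smul, LinearMap.smul_apply])
    (fun v w₁ w₂ => by
      ext p
      show S.t (v p.1) (w₁ p.2 + w₂ p.2) = S.t (v p.1) (w₁ p.2) + S.t (v p.1) (w₂ p.2)
      rw [map_add])
    (fun c v w => by
      ext p
      show S.t (v p.1) (c • w p.2) = c • S.t (v p.1) (w p.2)
      rw [map_smul])

theorem piT_apply (S : TensorStructure X X' XX) (v : PiLp 2 fun _ : ι => X)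
    (w : PiLp 2 fun _ : ι' => X') (q : ι × ι') :
    piT ι ι' S v w q = S.t (v q.1) (w q.2) := rfl

theorem piT_single [DecidableEq ι] [DecidableEq ι'] (S : TensorStructure X X' XX)
    (p : ι × ι') (a : X) (b : X') :
    piT ι ι' S ((WithLp.equiv 2 (∀ _ : ι, X)).symm (Pi.single p.1 a))
        ((WithLp.equiv 2 (∀ _ : ι', X')).symm (Pi.single p.2 b))
      = (WithLp.equiv 2 (∀ _ : ι × ι', XX)).symm (Pi.single p (S.t a b)) := by
  ext q
  simp only [piT_apply, WithLp.equiv_symm_apply, PiLp.toLp_apply]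
  by_cases h1 : q.1 = p.1 <;> by_cases h2 : q.2 = p.2 <;>
    simp [Pi.single_apply, h1, h2, Prod.ext_iff]

/-- Tensor structure on `ℓ²`-sums of the two factors of a tensor structure. -/
def piTS (S : TensorStructure X X' XX) :
    TensorStructure (PiLp 2 fun _ : ι => X) (PiLp 2 fun _ : ι' => X')
      (PiLp 2 fun _ : ι × ι' => XX) where
  t := piT ι ι' S
  inner_t v v' w w' := by
    classical
    rw [PiLp.inner_apply, PiLp.inner_apply (𝕜 := ℂ) v v', PiLp.inner_apply (𝕜 := ℂ) w w',
      Finset.sum_mul_sum, Fintype.sum_prod_type]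
    refine Finset.sum_congr rfl fun i _ => Finset.sum_congr rfl fun j _ => ?_
    rw [piT_apply, piT_apply, S.inner_t]
  span_t := by
    classical
    rw [eq_top_iff]
    intro u _
    have hu : u = ∑ p : ι × ι', (WithLp.linearEquiv 2 ℂ (∀ _ : ι × ι', XX)).symm
        (Pi.single p ((WithLp.linearEquiv 2 ℂ (∀ _ : ι × ι', XX)) u p)) := by
      rw [← map_sum, Finset.univ_sum_single, LinearEquiv.symm_apply_apply]
    rw [hu]
    refine Submodule.sum_mem _ fun p _ => ?_
    have hx : ((WithLp.linearEquiv 2 ℂ (∀ _ : ι × ι', XX)) u p : XX)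
        ∈ Submodule.span ℂ (Set.range fun q : X × X' => S.t q.1 q.2) := by
      rw [S.span_t]; trivial
    refine Submodule.span_induction ?_ ?_ ?_ ?_ hx
    · rintro x ⟨⟨a, b⟩, rfl⟩
      exact Submodule.subset_span
        ⟨((WithLp.equiv 2 (∀ _ : ι, X)).symm (Pi.single p.1 a),
          (WithLp.equiv 2 (∀ _ : ι', X')).symm (Pi.single p.2 b)), piT_single ι ι' S p a b⟩
    · rw [Pi.single_zero]
      exact Submodule.zero_mem _
    · intro x y _ _ hx' hy'
      rw [Pi.single_add, map_add]
      exact Submodule.add_mem _ hx' hy'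
    · intro c x _ hx'
      rw [Pi.single_smul, map_smul]
      exact Submodule.smul_mem _ _ hx'

end PiTS
end TensorStructure

section Gamma2Lemmas
variable {D₁ D₂ : Type*} [Fintype D₁] [Fintype D₂]
    {X₁ X₂ Z₁ Z₂ : Type*}
    [NormedAddCommGroup X₁] [InnerProductSpace ℂ X₁] [FiniteDimensional ℂ X₁]
    [NormedAddCommGroup X₂] [InnerProductSpace ℂ X₂] [FiniteDimensional ℂ X₂]
    [NormedAddCommGroup Z₁] [InnerProductSpace ℂ Z₁] [FiniteDimensional ℂ Z₁]
    [NormedAddCommGroup Z₂] [InnerProductSpace ℂ Z₂] [FiniteDimensional ℂ Z₂]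
    {A : D₁ → D₂ → (Z₂ →ₗ[ℂ] Z₁)} {Δ : D₁ → D₂ → (X₂ →ₗ[ℂ] X₁)}

theorem relGamma2_exists_witness {c : ℝ≥0∞} (h : relGamma2 A Δ < c) :
    ∃ (k : ℕ) (Υ : D₁ → (Z₁ →ₗ[ℂ] PiLp 2 (fun _ : Fin k => X₁)))
      (Φ : D₂ → (Z₂ →ₗ[ℂ] PiLp 2 (fun _ : Fin k => X₂))),
      (∀ x y, A x y =
        LinearMap.adjoint (Υ x) ∘ₗ piBlock (fun _ : Fin k => Δ x y) ∘ₗ Φ y) ∧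
      (⨆ x, ENNReal.ofReal (opNorm (Υ x) ^ 2)) ⊔ (⨆ y, ENNReal.ofReal (opNorm (Φ y) ^ 2)) < c := by
  simp only [relGamma2, iInf_lt_iff] at h
  obtain ⟨k, Υ, Φ, hf, hv⟩ := h
  exact ⟨k, Υ, Φ, hf, hv⟩

theorem relGamma2_le_witness (k : ℕ) (Υ : D₁ → (Z₁ →ₗ[ℂ] PiLp 2 (fun _ : Fin k => X₁)))
    (Φ : D₂ → (Z₂ →ₗ[ℂ] PiLp 2 (fun _ : Fin k => X₂)))
    (hfac : ∀ x y, A x y =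
      LinearMap.adjoint (Υ x) ∘ₗ piBlock (fun _ : Fin k => Δ x y) ∘ₗ Φ y) :
    relGamma2 A Δ ≤
      (⨆ x, ENNReal.ofReal (opNorm (Υ x) ^ 2)) ⊔ (⨆ y, ENNReal.ofReal (opNorm (Φ y) ^ 2)) :=
  iInf_le_of_le k (iInf_le_of_le Υ (iInf_le_of_le Φ (iInf_le_of_le hfac le_rfl)))

end Gamma2Lemmas

theorem adjoint_of_isometry {E F : Type*} [NormedAddCommGroup E] [InnerProductSpace ℂ E]
    [NormedAddCommGroup F] [InnerProductSpace ℂ F] [FiniteDimensional ℂ E]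
    [FiniteDimensional ℂ F] (e : E ≃ₗᵢ[ℂ] F) :
    LinearMap.adjoint (e.toLinearEquiv.toLinearMap) = e.symm.toLinearEquiv.toLinearMap := by
  symm
  rw [LinearMap.eq_adjoint_iff]
  intro x y
  show (inner ℂ (e.symm x) y : ℂ) = inner ℂ x (e y)
  rw [← e.inner_map_map (e.symm x) y, e.apply_symm_apply]

set_option maxHeartbeats 2000000

/-- Tensor product property of the relative `γ₂`-norm:
if `AB_{xy} = A_{xy} ⊗ B_{xy}` and `ΔE_{xy} = Δ_{xy} ⊗ E_{xy}` (with respect to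
realizations of the tensor products `Z₂ ⊗ Z₂'`, `Z₁ ⊗ Z₁'`, `X₂ ⊗ X₂'`, `X₁ ⊗ X₁'`),
then `γ₂(A ⊗ B | Δ ⊗ E) ≤ γ₂(A|Δ) · γ₂(B|E)` whenever both factors are finite. -/
theorem statement8 {D₁ D₂ : Type} [Fintype D₁] [Fintype D₂]
    {X₁ X₂ X₁' X₂' XX₁ XX₂ Z₁ Z₂ Z₁' Z₂' ZZ₁ ZZ₂ : Type}
    [NormedAddCommGroup X₁] [InnerProductSpace ℂ X₁] [FiniteDimensional ℂ X₁]
    [NormedAddCommGroup X₂] [InnerProductSpace ℂ X₂] [FiniteDimensional ℂ X₂]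
    [NormedAddCommGroup X₁'] [InnerProductSpace ℂ X₁'] [FiniteDimensional ℂ X₁']
    [NormedAddCommGroup X₂'] [InnerProductSpace ℂ X₂'] [FiniteDimensional ℂ X₂']
    [NormedAddCommGroup XX₁] [InnerProductSpace ℂ XX₁] [FiniteDimensional ℂ XX₁]
    [NormedAddCommGroup XX₂] [InnerProductSpace ℂ XX₂] [FiniteDimensional ℂ XX₂]
    [NormedAddCommGroup Z₁] [InnerProductSpace ℂ Z₁] [FiniteDimensional ℂ Z₁]
    [NormedAddCommGroup Z₂] [InnerProductSpace ℂ Z₂] [FiniteDimensional ℂ Z₂]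
    [NormedAddCommGroup Z₁'] [InnerProductSpace ℂ Z₁'] [FiniteDimensional ℂ Z₁']
    [NormedAddCommGroup Z₂'] [InnerProductSpace ℂ Z₂'] [FiniteDimensional ℂ Z₂']
    [NormedAddCommGroup ZZ₁] [InnerProductSpace ℂ ZZ₁] [FiniteDimensional ℂ ZZ₁]
    [NormedAddCommGroup ZZ₂] [InnerProductSpace ℂ ZZ₂] [FiniteDimensional ℂ ZZ₂]
    (TZ₁ : TensorStructure Z₁ Z₁' ZZ₁) (TZ₂ : TensorStructure Z₂ Z₂' ZZ₂)
    (TX₁ : TensorStructure X₁ X₁' XX₁) (TX₂ : TensorStructure X₂ X₂' XX₂)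
    (A : D₁ → D₂ → (Z₂ →ₗ[ℂ] Z₁)) (B : D₁ → D₂ → (Z₂' →ₗ[ℂ] Z₁'))
    (Δ : D₁ → D₂ → (X₂ →ₗ[ℂ] X₁)) (E : D₁ → D₂ → (X₂' →ₗ[ℂ] X₁'))
    (AB : D₁ → D₂ → (ZZ₂ →ₗ[ℂ] ZZ₁)) (ΔE : D₁ → D₂ → (XX₂ →ₗ[ℂ] XX₁))
    (hAB : ∀ x y a b, AB x y (TZ₂.t a b) = TZ₁.t (A x y a) (B x y b))
    (hΔE : ∀ x y a b, ΔE x y (TX₂.t a b) = TX₁.t (Δ x y a) (E x y b))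
    (hA : relGamma2 A Δ ≠ ⊤) (hB : relGamma2 B E ≠ ⊤) :
    relGamma2 AB ΔE ≤ relGamma2 A Δ * relGamma2 B E := by
  classical
  refine ENNReal.le_of_forall_pos_le_add fun ε hε _ => ?_
  have hne : relGamma2 A Δ + relGamma2 B E + 1 ≠ ⊤ := by
    simp [ENNReal.add_eq_top, hA, hB]
  set δ : ℝ≥0∞ := min 1 ((ε : ℝ≥0∞) / (relGamma2 A Δ + relGamma2 B E + 1)) with hδdef
  have hδ0 : 0 < δ :=
    lt_min one_pos (ENNReal.div_pos (by exact_mod_cast hε.ne') hne)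
  obtain ⟨k, Υ, Φ, hfacA, hvA⟩ := relGamma2_exists_witness (ENNReal.lt_add_right hA hδ0.ne')
  obtain ⟨l, Υ', Φ', hfacB, hvB⟩ := relGamma2_exists_witness (ENNReal.lt_add_right hB hδ0.ne')
  -- combined factorization over the index `Fin k × Fin l`
  choose F hF using fun x =>
    TensorStructure.exists_tmap TZ₁ (TX₁.piTS (Fin k) (Fin l)) (Υ x) (Υ' x)
  choose G hG using fun y =>
    TensorStructure.exists_tmap TZ₂ (TX₂.piTS (Fin k) (Fin l)) (Φ y) (Φ' y)
  have hfac0 : ∀ x y, AB x y =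
      LinearMap.adjoint (F x) ∘ₗ piBlock (fun _ : Fin k × Fin l => ΔE x y) ∘ₗ G y := by
    intro x y
    refine TZ₂.ext_map fun a b => ?_
    refine TZ₁.eq_of_inner_t fun c d => ?_
    rw [hAB, TZ₁.inner_t]
    simp only [LinearMap.comp_apply]
    rw [LinearMap.adjoint_inner_left, hG, hF, PiLp.inner_apply]
    have hterm : ∀ q : Fin k × Fin l,
        (inner ℂ ((piBlock (fun _ : Fin k × Fin l => ΔE x y)
              ((TX₂.piTS (Fin k) (Fin l)).t (Φ y a) (Φ' y b))) q)
            (((TX₁.piTS (Fin k) (Fin l)).t (Υ x c) (Υ' x d)) q) : ℂ)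
          = (inner ℂ (Δ x y (Φ y a q.1)) (Υ x c q.1) : ℂ)
              * (inner ℂ (E x y (Φ' y b q.2)) (Υ' x d q.2) : ℂ) := by
      intro q
      rw [piBlock_apply]
      rw [show ((TX₂.piTS (Fin k) (Fin l)).t (Φ y a) (Φ' y b)) q
          = TX₂.t (Φ y a q.1) (Φ' y b q.2) from rfl]
      rw [hΔE]
      rw [show ((TX₁.piTS (Fin k) (Fin l)).t (Υ x c) (Υ' x d)) q
          = TX₁.t (Υ x c q.1) (Υ' x d q.2) from rfl]
      rw [TX₁.inner_t]
    rw [Finset.sum_congr rfl fun q _ => hterm q, Fintype.sum_prod_type]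
    have hone : (inner ℂ (A x y a) c : ℂ) = ∑ i : Fin k, inner ℂ (Δ x y (Φ y a i)) (Υ x c i) := by
      rw [hfacA x y]
      simp only [LinearMap.comp_apply]
      rw [LinearMap.adjoint_inner_left, PiLp.inner_apply]
      exact Finset.sum_congr rfl fun i _ => by rw [piBlock_apply]
    have htwo : (inner ℂ (B x y b) d : ℂ) = ∑ j : Fin l, inner ℂ (E x y (Φ' y b j)) (Υ' x d j) := by
      rw [hfacB x y]
      simp only [LinearMap.comp_apply]
      rw [LinearMap.adjoint_inner_left, PiLp.inner_apply]
      exact Finset.sum_congr rfl fun j _ => by rw [piBlock_apply]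
    rw [hone, htwo, Finset.sum_mul_sum]
  -- reindex to `Fin (k * l)`
  let eqv : Fin k × Fin l ≃ Fin (k * l) := finProdFinEquiv
  let R₁ := LinearIsometryEquiv.piLpCongrLeft 2 ℂ XX₁ eqv
  let R₂ := LinearIsometryEquiv.piLpCongrLeft 2 ℂ XX₂ eqv
  let Υn : D₁ → (ZZ₁ →ₗ[ℂ] PiLp 2 (fun _ : Fin (k * l) => XX₁)) :=
    fun x => R₁.toLinearEquiv.toLinearMap ∘ₗ F x
  let Φn : D₂ → (ZZ₂ →ₗ[ℂ] PiLp 2 (fun _ : Fin (k * l) => XX₂)) :=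
    fun y => R₂.toLinearEquiv.toLinearMap ∘ₗ G y
  have hfacn : ∀ x y, AB x y =
      LinearMap.adjoint (Υn x) ∘ₗ piBlock (fun _ : Fin (k * l) => ΔE x y) ∘ₗ Φn y := by
    intro x y
    rw [hfac0 x y]
    refine LinearMap.ext fun u => ?_
    show LinearMap.adjoint (F x) (piBlock _ (G y u))
        = LinearMap.adjoint (Υn x) (piBlock (fun _ : Fin (k * l) => ΔE x y) (Φn y u))
    have h1 : piBlock (fun _ : Fin (k * l) => ΔE x y) (Φn y u)
        = R₁ (piBlock (fun _ : Fin k × Fin l => ΔE x y) (G y u)) := by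
      ext m
      rfl
    rw [h1]
    show _ = LinearMap.adjoint (R₁.toLinearEquiv.toLinearMap ∘ₗ F x) _
    rw [LinearMap.adjoint_comp, LinearMap.comp_apply, adjoint_of_isometry]
    congr 1
    exact (R₁.symm_apply_apply _).symm
  have hnormA : ∀ x, opNorm (Υn x) ≤ opNorm (Υ x) * opNorm (Υ' x) := by
    intro x
    have h2 : opNorm (Υn x) ≤ opNorm (F x) :=
      opNorm_le_bound _ (opNorm_nonneg _) fun v => by
        show ‖R₁ (F x v)‖ ≤ _
        rw [R₁.norm_map]
        exact le_opNorm _ v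
    exact h2.trans (TensorStructure.opNorm_tmap_le TZ₁ (TX₁.piTS (Fin k) (Fin l))
      (Υ x) (Υ' x) (F x) (hF x))
  have hnormB : ∀ y, opNorm (Φn y) ≤ opNorm (Φ y) * opNorm (Φ' y) := by
    intro y
    have h2 : opNorm (Φn y) ≤ opNorm (G y) :=
      opNorm_le_bound _ (opNorm_nonneg _) fun v => by
        show ‖R₂ (G y v)‖ ≤ _
        rw [R₂.norm_map]
        exact le_opNorm _ v
    exact h2.trans (TensorStructure.opNorm_tmap_le TZ₂ (TX₂.piTS (Fin k) (Fin l))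
      (Φ y) (Φ' y) (G y) (hG y))
  set vA := (⨆ x, ENNReal.ofReal (opNorm (Υ x) ^ 2))
      ⊔ (⨆ y, ENNReal.ofReal (opNorm (Φ y) ^ 2)) with hvadef
  set vB := (⨆ x, ENNReal.ofReal (opNorm (Υ' x) ^ 2))
      ⊔ (⨆ y, ENNReal.ofReal (opNorm (Φ' y) ^ 2)) with hvbdef
  have hval : relGamma2 AB ΔE ≤ vA * vB := by
    refine (relGamma2_le_witness (k * l) Υn Φn hfacn).trans ?_
    refine sup_le ?_ ?_
    · refine iSup_le fun x => ?_
      calc ENNReal.ofReal (opNorm (Υn x) ^ 2)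
          ≤ ENNReal.ofReal ((opNorm (Υ x) * opNorm (Υ' x)) ^ 2) :=
            ENNReal.ofReal_le_ofReal (pow_le_pow_left₀ (opNorm_nonneg _) (hnormA x) 2)
        _ = ENNReal.ofReal (opNorm (Υ x) ^ 2) * ENNReal.ofReal (opNorm (Υ' x) ^ 2) := by
            rw [mul_pow, ENNReal.ofReal_mul (pow_nonneg (opNorm_nonneg _) 2)]
        _ ≤ vA * vB :=
            mul_le_mul'
              (le_sup_of_le_left (le_iSup (fun x => ENNReal.ofReal (opNorm (Υ x) ^ 2)) x))
              (le_sup_of_le_left (le_iSup (fun x => ENNReal.ofReal (opNorm (Υ' x) ^ 2)) x))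
    · refine iSup_le fun y => ?_
      calc ENNReal.ofReal (opNorm (Φn y) ^ 2)
          ≤ ENNReal.ofReal ((opNorm (Φ y) * opNorm (Φ' y)) ^ 2) :=
            ENNReal.ofReal_le_ofReal (pow_le_pow_left₀ (opNorm_nonneg _) (hnormB y) 2)
        _ = ENNReal.ofReal (opNorm (Φ y) ^ 2) * ENNReal.ofReal (opNorm (Φ' y) ^ 2) := by
            rw [mul_pow, ENNReal.ofReal_mul (pow_nonneg (opNorm_nonneg _) 2)]
        _ ≤ vA * vB :=
            mul_le_mul'
              (le_sup_of_le_right (le_iSup (fun y => ENNReal.ofReal (opNorm (Φ y) ^ 2)) y))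
              (le_sup_of_le_right (le_iSup (fun y => ENNReal.ofReal (opNorm (Φ' y) ^ 2)) y))
  have hden0 : relGamma2 A Δ + relGamma2 B E + 1 ≠ 0 := by simp
  calc relGamma2 AB ΔE ≤ vA * vB := hval
    _ ≤ (relGamma2 A Δ + δ) * (relGamma2 B E + δ) := mul_le_mul' hvA.le hvB.le
    _ = relGamma2 A Δ * relGamma2 B E + δ * (relGamma2 A Δ + relGamma2 B E + δ) := by ring
    _ ≤ relGamma2 A Δ * relGamma2 B E + ε := by
        refine add_le_add_right ?_ _
        calc δ * (relGamma2 A Δ + relGamma2 B E + δ)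
            ≤ ((ε : ℝ≥0∞) / (relGamma2 A Δ + relGamma2 B E + 1))
              * (relGamma2 A Δ + relGamma2 B E + 1) :=
              mul_le_mul' (min_le_right _ _) (add_le_add_right (min_le_left _ _) _)
          _ = ε := ENNReal.div_mul_cancel hden0 hne


end
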